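/- Fix a visible configuration v and a hidden unit j : H. Then the conditional probability under the joint Boltzmann distribution that hidden unit j equals 1 given v is the sigmoid of its input: (∑ over hidden configurations h with h j = 1 of P(v,h)) / (∑ over all hidden configurations h of P(v,h)) = σ(c j + ∑_i v i * w i j). -/

import Mathlib

/-- RBM: the conditional probability under the joint Boltzmann distribution
that hidden unit `j` equals `1` given the visible configuration `v` is the
sigmoid of its input `c j + ∑ i, v i * w i j`. -/
theorem rbm_hidden_conditional_sigmoid
    {V H : Type*} [Fintype V] [Fintype H] [DecidableEq V] [DecidableEq H]
    (w : V → H → ℝ) (b : V → ℝ) (c : H → ℝ)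
    (E : (V → ℝ) → (H → ℝ) → ℝ)
    (hE : ∀ v h, E v h = -(∑ i, b i * v i) - (∑ j, c j * h j) -
      ∑ i, ∑ j, v i * w i j * h j)
    (Z : ℝ)
    (hZ : Z = ∑ p : (V → Bool) × (H → Bool),
      Real.exp (-(E (fun i => if p.1 i then 1 else 0)
        (fun j => if p.2 j then 1 else 0))))
    (P : (V → ℝ) → (H → ℝ) → ℝ)
    (hP : ∀ v h, P v h = Real.exp (-(E v h)) / Z)
    (σ : ℝ → ℝ) (hσ : ∀ x, σ x = 1 / (1 + Real.exp (-x)))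
    (v : V → ℝ) (hv : ∀ i, v i = 0 ∨ v i = 1) (j : H) :
    (∑ h ∈ Finset.univ.filter (fun h : H → Bool => h j = true),
        P v (fun k => if h k then 1 else 0)) /
      (∑ h : H → Bool, P v (fun k => if h k then 1 else 0))
      = σ (c j + ∑ i, v i * w i j) := by
  set a : ℝ := c j + ∑ i, v i * w i j with ha
  have hZpos : 0 < Z := by
    rw [hZ]
    exact Finset.sum_pos (fun p _ => Real.exp_pos _) Finset.univ_nonempty
  -- flipping unit j from true to false increases the energy by `a`
  have key : ∀ h : H → Bool, h j = true →
      E v (fun k => if Function.update h j false k then 1 else 0)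
        = E v (fun k => if h k then 1 else 0) + a := by
    intro h hhj
    have hsplit : ∀ f : H → ℝ,
        (∑ k, f k * (if Function.update h j false k then (1:ℝ) else 0))
          = (∑ k, f k * (if h k then (1:ℝ) else 0)) - f j := by
      intro f
      rw [← Finset.sum_erase_add _ _ (Finset.mem_univ j),
          ← Finset.sum_erase_add _ (fun k => f k * (if h k then (1:ℝ) else 0))
            (Finset.mem_univ j)]
      have herase : ∀ k ∈ Finset.univ.erase j,
          f k * (if Function.update h j false k then (1:ℝ) else 0)
            = f k * (if h k then (1:ℝ) else 0) := by
        intro k hk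
        rw [Function.update_of_ne (Finset.ne_of_mem_erase hk)]
      rw [Finset.sum_congr rfl herase]
      simp [hhj]
    rw [hE, hE]
    have h2 : ∀ i ∈ (Finset.univ : Finset V),
        (∑ k, v i * w i k * (if Function.update h j false k then (1:ℝ) else 0))
          = (∑ k, v i * w i k * (if h k then (1:ℝ) else 0)) - v i * w i j :=
      fun i _ => hsplit (fun k => v i * w i k)
    rw [hsplit c, Finset.sum_congr rfl h2, Finset.sum_sub_distrib]
    rw [ha]; ring
  have termpos : ∀ h : H → Bool, 0 < P v (fun k => if h k then 1 else 0) := by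
    intro h
    rw [hP]
    exact div_pos (Real.exp_pos _) hZpos
  have Npos : 0 < ∑ h ∈ Finset.univ.filter (fun h : H → Bool => h j = true),
      P v (fun k => if h k then 1 else 0) := by
    apply Finset.sum_pos (fun h _ => termpos h)
    exact ⟨fun _ => true, by simp⟩
  have S0eq : (∑ h ∈ Finset.univ.filter (fun h : H → Bool => ¬ h j = true),
        P v (fun k => if h k then 1 else 0))
      = Real.exp (-a) * ∑ h ∈ Finset.univ.filter (fun h : H → Bool => h j = true),
          P v (fun k => if h k then 1 else 0) := by
    rw [Finset.mul_sum]
    refine Finset.sum_bij' (fun h _ => Function.update h j true)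
      (fun h _ => Function.update h j false) ?_ ?_ ?_ ?_ ?_
    · intro h hh; simp
    · intro h hh; simp
    · intro h hh
      simp only [Finset.mem_filter, Finset.mem_univ, true_and] at hh
      funext k
      by_cases hk : k = j
      · subst hk; simp [Bool.not_eq_true] at hh; simp [hh]
      · simp [Function.update_of_ne hk]
    · intro h hh
      simp only [Finset.mem_filter, Finset.mem_univ, true_and] at hh
      funext k
      by_cases hk : k = j
      · subst hk; simp [hh]
      · simp [Function.update_of_ne hk]
    · intro h hh
      simp only [Finset.mem_filter, Finset.mem_univ, true_and] at hh
      have h1j : Function.update h j true j = true := by simp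
      have hback : Function.update (Function.update h j true) j false = h := by
        funext k
        by_cases hk : k = j
        · subst hk; simp [Bool.not_eq_true] at hh; simp [hh]
        · simp [Function.update_of_ne hk]
      have := key (Function.update h j true) h1j
      rw [hback] at this
      rw [hP, hP, this]
      rw [neg_add, Real.exp_add, mul_comm, mul_div_assoc]
  rw [← Finset.sum_filter_add_sum_filter_not Finset.univ
    (fun h : H → Bool => h j = true)
    (fun h => P v (fun k => if h k then 1 else 0)), S0eq, hσ]
  set N : ℝ := ∑ h ∈ Finset.univ.filter (fun h : H → Bool => h j = true),
      P v (fun k => if h k then 1 else 0) with hN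
  have h1e : (0:ℝ) < 1 + Real.exp (-a) := by positivity
  have hd : (0:ℝ) < N + Real.exp (-a) * N := by positivity
  rw [div_eq_div_iff hd.ne' h1e.ne']
  ring
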